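/- arXiv:1906.02892 — 5 statements merged into one kernel-verified Lean document; each statement's English description precedes it below -/
import Mathlib

section
/- Let B be an abelian group fitting in a short exact sequence 0 → Z/2Z → B → Z/2Z × Z/2Z × Z/2Z → 0, and suppose B contains an element of order 4. Then B is isomorphic to Z/4Z × Z/2Z × Z/2Z. -/
private lemma nsmul_mod' {B : Type*} [AddCommGroup B] (b : B) (n a : ℕ) (h : n • b = 0) :
    (a % n) • b = a • b := by
  conv_rhs => rw [← Nat.mod_add_div a n]
  rw [add_nsmul, mul_nsmul, h, smul_zero, add_zero]

private lemma val_add_smul {B : Type*} [AddCommGroup B] (b : B) (n : ℕ) [NeZero n]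
    (h : n • b = 0) (i i' : ZMod n) : (i + i').val • b = i.val • b + i'.val • b := by
  rw [ZMod.val_add, nsmul_mod' b n _ h, add_nsmul]

set_option maxHeartbeats 4000000 in
set_option synthInstance.maxSize 1000 in
set_option synthInstance.maxHeartbeats 1000000 in
private lemma key_basis : ∀ g : ZMod 2 × ZMod 2 × ZMod 2, g ≠ 0 →
    ∃ v1 v2 : ZMod 2 × ZMod 2 × ZMod 2, ∀ w1 w2 : ZMod 2 × ZMod 2 × ZMod 2,
    (w1 = v1 ∨ w1 = v1 + g) → (w2 = v2 ∨ w2 = v2 + g) →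
    Function.Bijective (fun c : ZMod 2 × ZMod 2 × ZMod 2 =>
      c.1.val • g + c.2.1.val • w1 + c.2.2.val • w2) := by
  decide

/-- If an abelian group `B` fits in a short exact sequence
`0 → ℤ/2ℤ → B → ℤ/2ℤ × ℤ/2ℤ × ℤ/2ℤ → 0` and contains an element of order `4`,
then `B` is isomorphic to `ℤ/4ℤ × ℤ/2ℤ × ℤ/2ℤ`. -/
theorem extension_with_order_four_element
    {B : Type*} [AddCommGroup B]
    (α : ZMod 2 →+ B) (β : B →+ ZMod 2 × ZMod 2 × ZMod 2)
    (hα : Function.Injective α) (hβ : Function.Surjective β)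
    (hexact : α.range = β.ker)
    (b : B) (hb : addOrderOf b = 4) :
    Nonempty (B ≃+ (ZMod 4 × ZMod 2 × ZMod 2)) := by
  -- basic facts
  have hG2 : ∀ g : ZMod 2 × ZMod 2 × ZMod 2, (2 : ℕ) • g = 0 := by decide
  have hb4 : (4 : ℕ) • b = 0 := by
    rw [← hb]; exact addOrderOf_nsmul_eq_zero b
  have hb2 : (2 : ℕ) • b ≠ 0 := by
    intro h
    have := addOrderOf_dvd_of_nsmul_eq_zero h
    rw [hb] at this
    omega
  -- kernel of β is {0, 2b}
  have hker : ∀ z : B, β z = 0 → z = 0 ∨ z = (2 : ℕ) • b := by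
    have h2b : (2 : ℕ) • b ∈ β.ker := by
      rw [AddMonoidHom.mem_ker, map_nsmul]; exact hG2 _
    rw [← hexact] at h2b
    obtain ⟨w1, hw1⟩ := h2b
    have hw1ne : w1 ≠ 0 := by
      intro h; rw [h, map_zero] at hw1; exact hb2 hw1.symm
    have htwo : ∀ w : ZMod 2, w ≠ 0 → w = 1 := by decide
    have hw1' : w1 = 1 := htwo w1 hw1ne
    intro z hz
    have hzk : z ∈ β.ker := hz
    rw [← hexact] at hzk
    obtain ⟨w, hw⟩ := hzk
    have hcases : ∀ w : ZMod 2, w = 0 ∨ w = 1 := by decide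
    have : w = 0 ∨ w = 1 := hcases w
    rcases this with h | h
    · left; rw [← hw, h, map_zero]
    · right; rw [← hw, h, ← hw1', hw1]
  -- β b ≠ 0
  have hβb : β b ≠ 0 := by
    intro h
    rcases hker b h with h0 | h2
    · rw [h0] at hb; simp at hb
    · apply hb2
      calc (2 : ℕ) • b = (2 : ℕ) • ((2:ℕ) • b) := by conv_lhs => rw [h2]
        _ = (4 : ℕ) • b := by rw [← mul_nsmul]
        _ = 0 := hb4
  obtain ⟨v1, v2, hbij⟩ := key_basis (β b) hβb
  -- choose preimages of v1, v2 with 2x = 0, 2y = 0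
  have adjust : ∀ v : ZMod 2 × ZMod 2 × ZMod 2,
      ∃ x : B, (2 : ℕ) • x = 0 ∧ (β x = v ∨ β x = v + β b) := by
    intro v
    obtain ⟨x', hx'⟩ := hβ v
    have h2x' : β ((2:ℕ) • x') = 0 := by rw [map_nsmul]; exact hG2 _
    rcases hker _ h2x' with h0 | h2
    · exact ⟨x', h0, Or.inl hx'⟩
    · refine ⟨x' + b, ?_, Or.inr ?_⟩
      · rw [smul_add, h2, ← add_nsmul]
        exact hb4
      · rw [map_add, hx']
  obtain ⟨x, hx2, hx1⟩ := adjust v1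
  obtain ⟨y, hy2, hy1⟩ := adjust v2
  have hψ := hbij (β x) (β y) hx1 hy1
  -- the map φ
  set φ : ZMod 4 × ZMod 2 × ZMod 2 → B :=
    fun c => c.1.val • b + c.2.1.val • x + c.2.2.val • y with hφdef
  have hadd : ∀ c d, φ (c + d) = φ c + φ d := by
    intro c d
    simp only [hφdef, Prod.fst_add, Prod.snd_add]
    rw [val_add_smul b 4 hb4, val_add_smul x 2 hx2, val_add_smul y 2 hy2]
    abel
  set f : ZMod 4 × ZMod 2 × ZMod 2 →+ B := AddMonoidHom.mk' φ hadd with hfdef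
  -- β ∘ φ computation
  have hβφ : ∀ c : ZMod 4 × ZMod 2 × ZMod 2,
      β (φ c) = ((c.1.val : ZMod 2)).val • β b + c.2.1.val • β x + c.2.2.val • β y := by
    intro c
    simp only [hφdef, map_add, map_nsmul]
    congr 1
    congr 1
    rw [ZMod.val_natCast, nsmul_mod' (β b) 2 _ (hG2 _)]
  -- injectivity
  have hinj : Function.Injective f := by
    rw [injective_iff_map_eq_zero]
    intro c hc
    have hβc : ((c.1.val : ZMod 2)).val • β b + c.2.1.val • β x + c.2.2.val • β y = 0 := by
      rw [← hβφ c]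
      show β (f c) = 0
      rw [hc, map_zero]
    have h0 : (fun c : ZMod 2 × ZMod 2 × ZMod 2 =>
        c.1.val • β b + c.2.1.val • β x + c.2.2.val • β y)
        ((c.1.val : ZMod 2), c.2.1, c.2.2) = (fun c : ZMod 2 × ZMod 2 × ZMod 2 =>
        c.1.val • β b + c.2.1.val • β x + c.2.2.val • β y) (0, 0, 0) := by
      simp only [ZMod.val_zero, zero_nsmul, add_zero]
      exact hβc
    have heq := hψ.1 h0
    have h1 : (c.1.val : ZMod 2) = 0 := congrArg Prod.fst heq
    have h21 : c.2.1 = 0 := congrArg (fun p => p.2.1) heq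
    have h22 : c.2.2 = 0 := congrArg (fun p => p.2.2) heq
    have hc' : c.1.val • b = 0 := by
      have hφc : φ c = 0 := hc
      rw [hφdef] at hφc
      simp only [h21, h22, ZMod.val_zero, zero_nsmul, add_zero] at hφc
      exact hφc
    have hdvd : 4 ∣ c.1.val := by
      have := addOrderOf_dvd_of_nsmul_eq_zero hc'
      rwa [hb] at this
    have hlt : c.1.val < 4 := ZMod.val_lt c.1
    have : c.1.val = 0 := by omega
    have hc1 : c.1 = 0 := (ZMod.val_eq_zero c.1).mp this
    exact Prod.ext hc1 (Prod.ext h21 h22)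
  -- surjectivity
  have hsurj : Function.Surjective f := by
    intro z
    obtain ⟨c, hc⟩ := hψ.2 (β z)
    set i0 : ZMod 4 := (c.1.val : ZMod 4) with hi0def
    have hi0val : i0.val = c.1.val := by
      rw [hi0def, ZMod.val_natCast, Nat.mod_eq_of_lt (lt_of_lt_of_le (ZMod.val_lt c.1) (by norm_num))]
    have hβu : β (φ (i0, c.2.1, c.2.2)) = β z := by
      rw [hβφ]
      simp only
      rw [hi0val, ZMod.natCast_rightInverse c.1]
      exact hc
    have hd : β (z - φ (i0, c.2.1, c.2.2)) = 0 := by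
      rw [map_sub, hβu, sub_self]
    rcases hker _ hd with h0 | h2
    · exact ⟨(i0, c.2.1, c.2.2), (sub_eq_zero.mp h0).symm⟩
    · refine ⟨(i0 + 2, c.2.1, c.2.2), ?_⟩
      have hz : z = φ (i0, c.2.1, c.2.2) + (2:ℕ) • b := by
        have := sub_eq_iff_eq_add.mp h2
        rw [this]; abel
      show φ (i0 + 2, c.2.1, c.2.2) = z
      rw [hz, hφdef]
      simp only
      have hval : (i0 + 2).val = i0.val + 2 := by
        rw [ZMod.val_add]
        have h2v : (2 : ZMod 4).val = 2 := rfl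
        rw [h2v]
        have : i0.val < 2 := by rw [hi0val]; exact ZMod.val_lt c.1
        omega
      rw [hval, add_nsmul]
      abel
  exact ⟨(AddEquiv.ofBijective f ⟨hinj, hsurj⟩).symm⟩
end

section
/- Define α : Z → Z × (Z/2Z)³ by α(n) = (2n, 0, 0, 0), and β : Z × (Z/2Z)³ → (Z/2Z)⁴ by β(a, b, c, d) = (c, ā + b, d, b), where ā denotes the reduction of a modulo 2. Then the sequence 0 → Z →^α Z × (Z/2Z)³ →^β (Z/2Z)⁴ → 0 is exact: α is injective, β is surjective, and the image of α equals the kernel of β. -/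
/-- The map `α : ℤ → ℤ × (ℤ/2ℤ)³`, `n ↦ (2n, 0, 0, 0)`. -/
def alphaMap (n : ℤ) : ℤ × ZMod 2 × ZMod 2 × ZMod 2 := (2 * n, 0, 0, 0)

/-- The map `β : ℤ × (ℤ/2ℤ)³ → (ℤ/2ℤ)⁴`,
`(a, b, c, d) ↦ (c, ā + b, d, b)`, where `ā` is `a` reduced mod `2`. -/
def betaMap (p : ℤ × ZMod 2 × ZMod 2 × ZMod 2) :
    ZMod 2 × ZMod 2 × ZMod 2 × ZMod 2 :=
  (p.2.2.1, (p.1 : ZMod 2) + p.2.1, p.2.2.2, p.2.1)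

/-- The sequence `0 → ℤ →α ℤ × (ℤ/2ℤ)³ →β (ℤ/2ℤ)⁴ → 0` is exact: `α` is
injective, `β` is surjective, and the image of `α` equals the kernel of `β`. -/
theorem alpha_beta_exact :
    Function.Injective alphaMap ∧ Function.Surjective betaMap ∧
      Set.range alphaMap = {p | betaMap p = 0} := by
  refine ⟨?_, ?_, ?_⟩
  · intro m n h
    have := congrArg Prod.fst h
    simp only [alphaMap] at this
    omega
  · rintro ⟨w, x, y, z⟩
    refine ⟨((x + z).val, z, w, y), ?_⟩
    simp only [betaMap]
    refine Prod.ext ?_ (Prod.ext ?_ (Prod.ext ?_ ?_)) <;> simp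
    rw [add_assoc, CharTwo.add_self_eq_zero, add_zero]
  · ext ⟨a, b, c, d⟩
    simp only [Set.mem_range, Set.mem_setOf_eq, alphaMap, betaMap, Prod.mk.injEq,
      Prod.ext_iff]
    constructor
    · rintro ⟨n, hn, hb, hc, hd⟩
      subst hn
      simp [← hb, ← hc, ← hd]
      exact Or.inl rfl
    · rintro ⟨hc, hab, hd, hb⟩
      have hb0 : b = 0 := hb
      have ha : (a : ZMod 2) = 0 := by rw [hb0, add_zero] at hab; exact hab
      have : (2 : ℤ) ∣ a := by
        have := (ZMod.intCast_zmod_eq_zero_iff_dvd a 2).mp ha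
        exact_mod_cast this
      obtain ⟨n, hn⟩ := this
      exact ⟨n, hn.symm, hb0.symm, hc.symm, hd.symm⟩
end

section
/- Let G = Z ⋊ Z/2Z be the infinite dihedral group, with the Z/2Z generator r acting on Z by negation, and let φ : G → {±1} be the homomorphism that is trivial on Z and sends r to −1. Then the group of crossed homomorphisms ν : G → Z satisfying ν(gh) = ν(g) + φ(g)ν(h), modulo principal crossed homomorphisms g ↦ φ(g)c − c, is isomorphic to Z × Z/2Z. -/
/-- The abelian group of crossed homomorphisms `ν : G → ℤ` with respect to a
twist `φ : G → ℤ`: `ν (g * h) = ν g + φ g * ν h`. -/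
def crossedHoms (G : Type*) [Group G] (φ : G → ℤ) : AddSubgroup (G → ℤ) where
  carrier := {ν | ∀ g h : G, ν (g * h) = ν g + φ g * ν h}
  zero_mem' := by intro g h; simp
  add_mem' := by
    intro a b ha hb g h
    simp only [Pi.add_apply, ha g h, hb g h]; ring
  neg_mem' := by
    intro a ha g h
    simp only [Pi.neg_apply, ha g h]; ring

/-- The subgroup of principal crossed homomorphisms `g ↦ φ g * c - c`. -/
def principalCrossedHoms (G : Type*) [Group G] (φ : G → ℤ) :
    AddSubgroup (G → ℤ) where
  carrier := {ν | ∃ c : ℤ, ∀ g : G, ν g = φ g * c - c}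
  zero_mem' := ⟨0, by intro g; simp⟩
  add_mem' := by
    rintro a b ⟨c, hc⟩ ⟨d, hd⟩
    exact ⟨c + d, by intro g; simp [hc g, hd g]; ring⟩
  neg_mem' := by
    rintro a ⟨c, hc⟩
    exact ⟨-c, by intro g; simp [hc g]; ring⟩

/-- The infinite dihedral group `ℤ ⋊ ℤ/2ℤ`: the dihedral group over
`ZMod 0 = ℤ`, generated by a translation `t` and a reflection `r` with
`r² = 1` and `r t r = t⁻¹` (the reflection acting on `ℤ` by negation). -/
abbrev InfDihedral := DihedralGroup 0

/-- The twist `φ : ℤ ⋊ ℤ/2ℤ → {±1}` that is trivial on the translations and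
sends the reflections to `-1`. -/
def phiDihedral : InfDihedral → ℤ
  | DihedralGroup.r _ => 1
  | DihedralGroup.sr _ => -1


namespace TwistedH1Aux

open DihedralGroup

/-- The definitional identification `ZMod 0 → ℤ`. -/
def zOf : ZMod 0 → ℤ := fun i => i

lemma crossed_r {ν : InfDihedral → ℤ}
    (hν : ν ∈ crossedHoms InfDihedral phiDihedral) (i : ZMod 0) :
    ν (r i) = ν (r 1) * zOf i := by
  have key : ∀ j : ℤ, ν (r j) = ν (r 1) * j := by
    intro j
    have hadd : ∀ a b : ℤ, ν (r (a + b)) = ν (r a) + ν (r b) := by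
      intro a b
      exact (hν (r a) (r b)).trans (by simp [phiDihedral])
    let F : ℤ →+ ℤ := AddMonoidHom.mk' (fun a => ν (r a)) hadd
    have : F j = j • F 1 := by rw [← map_zsmul]; norm_num
    exact this.trans (mul_comm _ _)
  exact key (zOf i)

lemma crossed_sr {ν : InfDihedral → ℤ}
    (hν : ν ∈ crossedHoms InfDihedral phiDihedral) (i : ZMod 0) :
    ν (sr i) = ν (sr 0) - ν (r 1) * zOf i := by
  have h := hν (sr 0) (r i)
  rw [sr_mul_r, zero_add] at h
  rw [h, crossed_r hν i]
  show ν (sr 0) + (-1 : ℤ) * (ν (r 1) * zOf i) = _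
  ring

/-- A crossed homomorphism determined by `a = ν (r 1)` and `b = ν (sr 0)`. -/
def mkNu (a b : ℤ) : InfDihedral → ℤ
  | DihedralGroup.r i => a * zOf i
  | DihedralGroup.sr i => b - a * zOf i

lemma mkNu_rr (a b i j : ℤ) : mkNu a b (r i * r j) =
    mkNu a b (r i) + phiDihedral (r i) * mkNu a b (r j) := by
  show a * (i + j) = a * i + 1 * (a * j); ring

lemma mkNu_rsr (a b i j : ℤ) : mkNu a b (r i * sr j) =
    mkNu a b (r i) + phiDihedral (r i) * mkNu a b (sr j) := by
  show b - a * (j - i) = a * i + 1 * (b - a * j); ring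

lemma mkNu_srr (a b i j : ℤ) : mkNu a b (sr i * r j) =
    mkNu a b (sr i) + phiDihedral (sr i) * mkNu a b (r j) := by
  show b - a * (i + j) = (b - a * i) + (-1) * (a * j); ring

lemma mkNu_srsr (a b i j : ℤ) : mkNu a b (sr i * sr j) =
    mkNu a b (sr i) + phiDihedral (sr i) * mkNu a b (sr j) := by
  show a * (j - i) = (b - a * i) + (-1) * (b - a * j); ring

lemma mkNu_mem (a b : ℤ) : mkNu a b ∈ crossedHoms InfDihedral phiDihedral := by
  rintro (i | i) (j | j)
  · exact mkNu_rr a b (zOf i) (zOf j)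
  · exact mkNu_rsr a b (zOf i) (zOf j)
  · exact mkNu_srr a b (zOf i) (zOf j)
  · exact mkNu_srsr a b (zOf i) (zOf j)

/-- Evaluation of a crossed homomorphism at the generators. -/
def evalHom : (crossedHoms InfDihedral phiDihedral) →+ ℤ × ZMod 2 where
  toFun ν := (ν.1 (r 1), ((ν.1 (sr 0) : ℤ) : ZMod 2))
  map_zero' := by simp
  map_add' := by
    intro x y
    show ((x.1 + y.1) (r 1), (((x.1 + y.1) (sr 0) : ℤ) : ZMod 2)) = _
    simp [Prod.ext_iff]

lemma evalHom_surjective : Function.Surjective evalHom := by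
  rintro ⟨a, b0⟩
  obtain ⟨b, hb⟩ := ZMod.intCast_surjective (n := 2) b0
  refine ⟨⟨mkNu a b, mkNu_mem a b⟩, ?_⟩
  have e1 : mkNu a b (r 1) = a := by show a * (1 : ℤ) = a; ring
  have e2 : mkNu a b (sr 0) = b := by show b - a * (0 : ℤ) = b; ring
  show (mkNu a b (r 1), ((mkNu a b (sr 0) : ℤ) : ZMod 2)) = (a, b0)
  rw [e1, e2, hb]

lemma ker_eq :
    evalHom.ker = (principalCrossedHoms InfDihedral phiDihedral).addSubgroupOf
      (crossedHoms InfDihedral phiDihedral) := by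
  ext ν
  rw [AddMonoidHom.mem_ker, AddSubgroup.mem_addSubgroupOf]
  constructor
  · intro h
    have h1 : (ν : InfDihedral → ℤ) (r 1) = 0 := congrArg Prod.fst h
    have h2 : (((ν : InfDihedral → ℤ) (sr 0) : ℤ) : ZMod 2) = 0 := congrArg Prod.snd h
    rw [ZMod.intCast_zmod_eq_zero_iff_dvd] at h2
    obtain ⟨k, hk⟩ := h2
    refine ⟨-k, ?_⟩
    rintro (i | i)
    · rw [crossed_r ν.2 i, h1]
      show (0 : ℤ) * zOf i = 1 * (-k) - (-k)
      ring
    · rw [crossed_sr ν.2 i, h1, hk]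
      show ((2 : ℕ) : ℤ) * k - 0 * zOf i = (-1) * (-k) - (-k)
      push_cast; ring
  · rintro ⟨c, hc⟩
    have h1 : (ν : InfDihedral → ℤ) (r 1) = 0 := by
      rw [hc (r 1)]; show (1 : ℤ) * c - c = 0; ring
    have h2 : (ν : InfDihedral → ℤ) (sr 0) = -2 * c := by
      rw [hc (sr 0)]; show (-1 : ℤ) * c - c = -2 * c; ring
    rw [Prod.ext_iff]
    refine ⟨h1, ?_⟩
    show (((ν : InfDihedral → ℤ) (sr 0) : ℤ) : ZMod 2) = 0
    rw [h2, ZMod.intCast_zmod_eq_zero_iff_dvd]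
    exact ⟨-c, by push_cast; ring⟩

end TwistedH1Aux

/-- For the infinite dihedral group `G = ℤ ⋊ ℤ/2ℤ` with twist `φ` trivial on
`ℤ` and sending the reflection to `-1`, the group of crossed homomorphisms
`ν : G → ℤ` modulo principal crossed homomorphisms is isomorphic to
`ℤ × ℤ/2ℤ`. -/
theorem twisted_H1_of_infDihedral :
    Nonempty
      ((crossedHoms InfDihedral phiDihedral ⧸
          (principalCrossedHoms InfDihedral phiDihedral).addSubgroupOf
            (crossedHoms InfDihedral phiDihedral))
        ≃+ ℤ × ZMod 2) := by
  exact ⟨(QuotientAddGroup.quotientAddEquivOfEq TwistedH1Aux.ker_eq.symm).trans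
    (QuotientAddGroup.quotientKerEquivOfSurjective TwistedH1Aux.evalHom
      TwistedH1Aux.evalHom_surjective)⟩
end

section
/- Let G = Z³ ⋊ Z/2Z, where the generator r of Z/2Z acts on Z³ by negation, and let φ : G → {±1} be trivial on Z³ and send r to −1. Then the quotient of the group of crossed homomorphisms ν : G → Z (satisfying ν(gh) = ν(g) + φ(g)ν(h), where Z is a G-module via φ) by the subgroup of principal crossed homomorphisms g ↦ φ(g)c − c is isomorphic to Z³ × Z/2Z. -/
/-- The inversion (negation) automorphism of `ℤ³`, written multiplicatively. -/
def negAut : MulAut (Multiplicative (ℤ × ℤ × ℤ)) := MulEquiv.inv _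

/-- The action of `ℤ/2ℤ` on `ℤ³` in which the generator acts by negation. -/
def thetaAction :
    Multiplicative (ZMod 2) →* MulAut (Multiplicative (ℤ × ℤ × ℤ)) where
  toFun g := if Multiplicative.toAdd g = 0 then 1 else negAut
  map_one' := by simp
  map_mul' := by
    intro a b
    have hsq : negAut * negAut = 1 := by
      ext x <;>
      simp [negAut]
    have h2 : ∀ x : ZMod 2, x = 0 ∨ x = 1 := by decide
    rcases h2 (Multiplicative.toAdd a) with ha | ha <;>
      rcases h2 (Multiplicative.toAdd b) with hb | hb <;>
        simp [toAdd_mul, ha, hb, hsq, show (1 : ZMod 2) + 1 = 0 by decide]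

/-- The group `ℤ³ ⋊ ℤ/2ℤ`, where the generator of `ℤ/2ℤ` acts on `ℤ³` by
negation.  This is the abstract group of the space group `P-1`. -/
abbrev PBarOne := Multiplicative (ℤ × ℤ × ℤ) ⋊[thetaAction] Multiplicative (ZMod 2)

/-- The twist `φ : ℤ³ ⋊ ℤ/2ℤ → {±1}`, trivial on `ℤ³` and sending the
inversion `r` to `-1`. -/
def phiPBarOne : PBarOne → ℤ := fun g =>
  if Multiplicative.toAdd g.right = 0 then 1 else -1

namespace PBarOneAux
open Multiplicative

lemma zmod2_cases (x : ZMod 2) : x = 0 ∨ x = 1 := by revert x; decide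

lemma zmod2_add_self (x : ZMod 2) : x + x = 0 := by revert x; decide

def dotm (m a : ℤ × ℤ × ℤ) : ℤ := m.1 * a.1 + m.2.1 * a.2.1 + m.2.2 * a.2.2

lemma dotm_add (m x y : ℤ × ℤ × ℤ) : dotm m (x + y) = dotm m x + dotm m y := by
  simp [dotm, Prod.fst_add, Prod.snd_add]; ring

lemma dotm_neg (m x : ℤ × ℤ × ℤ) : dotm m (-x) = -dotm m x := by
  simp [dotm]; ring

def T (x : ℤ × ℤ × ℤ) : PBarOne := ⟨ofAdd x, 1⟩
def R : PBarOne := ⟨1, ofAdd 1⟩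

lemma T_left (x : ℤ × ℤ × ℤ) : (T x).left = ofAdd x := rfl
lemma T_right (x : ℤ × ℤ × ℤ) : (T x).right = 1 := rfl
lemma R_left : R.left = 1 := rfl
lemma R_right : R.right = ofAdd 1 := rfl

lemma phi_eval (g : PBarOne) :
    phiPBarOne g = if toAdd g.right = 0 then 1 else -1 := rfl

lemma theta_apply (t : Multiplicative (ZMod 2)) (b : Multiplicative (ℤ×ℤ×ℤ)) :
    thetaAction t b = if toAdd t = 0 then b else b⁻¹ := by
  show (if toAdd t = 0 then (1 : MulAut _) else negAut) b = _
  split_ifs with h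
  · rfl
  · rfl

lemma mul_left' (g h : PBarOne) :
    toAdd (g * h).left = toAdd g.left +
      (if toAdd g.right = 0 then toAdd h.left else -toAdd h.left) := by
  have : (g * h).left = g.left * thetaAction g.right h.left := rfl
  rw [this, theta_apply]
  by_cases hg : toAdd g.right = 0 <;> simp [hg]

lemma mul_right' (g h : PBarOne) :
    toAdd (g * h).right = toAdd g.right + toAdd h.right := rfl

lemma T_mul (x y : ℤ × ℤ × ℤ) : T x * T y = T (x + y) := by
  ext : 1
  · show ofAdd x * thetaAction 1 (ofAdd y) = ofAdd (x + y)
    rw [map_one thetaAction]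
    rfl
  · show (1 : Multiplicative (ZMod 2)) * 1 = 1
    simp

lemma phi_T (x : ℤ × ℤ × ℤ) : phiPBarOne (T x) = 1 := by
  rw [phi_eval, T_right]; simp

lemma phi_R : phiPBarOne R = -1 := by
  rw [phi_eval, R_right]
  norm_num [show ((1:ZMod 2) ≠ 0) from by decide]

lemma g_decomp_0 (g : PBarOne) (h : toAdd g.right = 0) : g = T (toAdd g.left) := by
  ext : 1
  · show g.left = ofAdd (toAdd g.left); simp
  · show g.right = 1
    exact toAdd.injective (by simpa using h)

lemma g_decomp_1 (g : PBarOne) (h : toAdd g.right = 1) :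
    g = T (toAdd g.left) * R := by
  have hr : g.right = ofAdd 1 := toAdd.injective (by simpa using h)
  ext : 1
  · show g.left = ofAdd (toAdd g.left) * thetaAction (T (toAdd g.left)).right R.left
    rw [T_right, map_one thetaAction, R_left]
    simp
  · show g.right = (T (toAdd g.left)).right * R.right
    rw [T_right, R_right, one_mul, hr]

lemma crossed_structure (ν : PBarOne → ℤ)
    (hν : ν ∈ crossedHoms PBarOne phiPBarOne) (g : PBarOne) :
    ν g = dotm (ν (T (1,0,0)), ν (T (0,1,0)), ν (T (0,0,1))) (toAdd g.left) +
      (if toAdd g.right = 0 then 0 else ν R) := by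
  have hadd : ∀ x y : ℤ × ℤ × ℤ, ν (T (x + y)) = ν (T x) + ν (T y) := by
    intro x y
    have h := hν (T x) (T y)
    rw [T_mul, phi_T, one_mul] at h
    exact h
  have hlin : ∀ x : ℤ × ℤ × ℤ,
      ν (T x) = dotm (ν (T (1,0,0)), ν (T (0,1,0)), ν (T (0,0,1))) x := by
    intro x
    let F : (ℤ × ℤ × ℤ) →+ ℤ := AddMonoidHom.mk' (fun x => ν (T x)) hadd
    have hx : x = x.1 • ((1,0,0) : ℤ×ℤ×ℤ) + x.2.1 • (0,1,0) + x.2.2 • (0,0,1) := by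
      simp [Prod.ext_iff]
    have : ν (T x) = F x := rfl
    rw [this, hx, map_add, map_add, map_zsmul, map_zsmul, map_zsmul]
    show x.1 • ν (T (1,0,0)) + x.2.1 • ν (T (0,1,0)) + x.2.2 • ν (T (0,0,1)) = _
    simp [dotm, smul_eq_mul]
    ring
  rcases zmod2_cases (toAdd g.right) with h | h
  · conv_lhs => rw [g_decomp_0 g h]
    rw [hlin, if_pos h, add_zero]
  · rw [if_neg (by rw [h]; decide)]
    conv_lhs => rw [g_decomp_1 g h]
    rw [hν (T (toAdd g.left)) R, phi_T, one_mul, hlin]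

def Phi : crossedHoms PBarOne phiPBarOne →+ (ℤ × ℤ × ℤ) × ZMod 2 where
  toFun ν := ((ν.1 (T (1,0,0)), ν.1 (T (0,1,0)), ν.1 (T (0,0,1))),
    ((ν.1 R : ℤ) : ZMod 2))
  map_zero' := rfl
  map_add' := by
    intro a b
    simp [Prod.ext_iff]

lemma Phi_surjective : Function.Surjective Phi := by
  rintro ⟨m, z⟩
  set ν : PBarOne → ℤ := fun g =>
    dotm m (toAdd g.left) + (if toAdd g.right = 0 then 0 else (z.val : ℤ))
    with hνdef
  have hν : ν ∈ crossedHoms PBarOne phiPBarOne := by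
    intro g h
    rw [hνdef]
    simp only
    rw [mul_left', mul_right', phi_eval]
    rcases zmod2_cases (toAdd g.right) with ht | ht <;>
      rcases zmod2_cases (toAdd h.right) with hs | hs <;>
        rw [ht, hs] <;>
        simp [dotm_add, dotm_neg, show ((1:ZMod 2) + 1 = 0) from by decide,
          show ((0:ZMod 2) + 1 = 1) from by decide,
          show ((1:ZMod 2) ≠ 0) from by decide] <;>
        ring
  refine ⟨⟨ν, hν⟩, ?_⟩
  have hz : ∀ w : ZMod 2, (((w.val : ℤ)) : ZMod 2) = w := by decide
  have h1 : toAdd (T ((1:ℤ),(0:ℤ),(0:ℤ))).right = 0 := rfl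
  have hR : toAdd R.right = (1 : ZMod 2) := rfl
  show ((ν (T (1,0,0)), ν (T (0,1,0)), ν (T (0,0,1))), ((ν R : ℤ) : ZMod 2)) = (m, z)
  rw [hνdef]
  simp only [T_left, T_right, R_left, R_right, toAdd_ofAdd, toAdd_one]
  norm_num [dotm, show ((1:ZMod 2) ≠ 0) from by decide, hz, Prod.ext_iff]

lemma ker_Phi :
    (principalCrossedHoms PBarOne phiPBarOne).addSubgroupOf
      (crossedHoms PBarOne phiPBarOne) = Phi.ker := by
  ext ν
  rw [AddSubgroup.mem_addSubgroupOf, AddMonoidHom.mem_ker]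
  constructor
  · rintro ⟨c, hc⟩
    have h1 : ν.1 (T (1,0,0)) = 0 := by rw [hc, phi_T]; ring
    have h2 : ν.1 (T (0,1,0)) = 0 := by rw [hc, phi_T]; ring
    have h3 : ν.1 (T (0,0,1)) = 0 := by rw [hc, phi_T]; ring
    have h4 : ν.1 R = -2 * c := by rw [hc, phi_R]; ring
    show ((ν.1 (T (1,0,0)), ν.1 (T (0,1,0)), ν.1 (T (0,0,1))),
        ((ν.1 R : ℤ) : ZMod 2)) = 0
    rw [h1, h2, h3, h4]
    have hcast : ((-2*c : ℤ) : ZMod 2) = 0 := by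
      rw [ZMod.intCast_zmod_eq_zero_iff_dvd]
      exact ⟨-c, by push_cast; ring⟩
    show ((((0:ℤ),(0:ℤ),(0:ℤ)), ((-2*c : ℤ) : ZMod 2)) : (ℤ×ℤ×ℤ) × ZMod 2)
      = (((0,0,0), 0) : (ℤ×ℤ×ℤ) × ZMod 2)
    rw [hcast]
  · intro h
    have h' : ((ν.1 (T (1,0,0)), ν.1 (T (0,1,0)), ν.1 (T (0,0,1))),
        ((ν.1 R : ℤ) : ZMod 2)) = (0 : (ℤ×ℤ×ℤ) × ZMod 2) := h
    have h1 : ν.1 (T (1,0,0)) = 0 := congrArg (fun p => p.1.1) h'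
    have h2 : ν.1 (T (0,1,0)) = 0 := congrArg (fun p => p.1.2.1) h'
    have h3 : ν.1 (T (0,0,1)) = 0 := congrArg (fun p => p.1.2.2) h'
    have h4 : ((ν.1 R : ℤ) : ZMod 2) = 0 := congrArg Prod.snd h'
    have hdvd : ((2:ℕ) : ℤ) ∣ ν.1 R := (ZMod.intCast_zmod_eq_zero_iff_dvd _ 2).mp h4
    obtain ⟨k, hk⟩ := hdvd
    push_cast at hk
    refine ⟨-k, fun g => ?_⟩
    have hs := crossed_structure ν.1 ν.2 g
    rw [h1, h2, h3] at hs
    rw [hs, phi_eval]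
    rcases zmod2_cases (toAdd g.right) with ht | ht <;>
      rw [ht] <;>
      simp [dotm, hk, show ((1:ZMod 2) ≠ 0) from by decide] <;> ring

end PBarOneAux
/-- For `G = ℤ³ ⋊ ℤ/2ℤ` (inversion acting by negation) with twist `φ` trivial
on `ℤ³` and `φ(r) = -1`, the group of crossed homomorphisms `ν : G → ℤ`
modulo principal crossed homomorphisms is isomorphic to `ℤ³ × ℤ/2ℤ`. -/
theorem twisted_H1_of_PBarOne :
    Nonempty
      ((crossedHoms PBarOne phiPBarOne ⧸
          (principalCrossedHoms PBarOne phiPBarOne).addSubgroupOf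
            (crossedHoms PBarOne phiPBarOne))
        ≃+ (ℤ × ℤ × ℤ) × ZMod 2) := by
  exact ⟨(QuotientAddGroup.quotientAddEquivOfEq PBarOneAux.ker_Phi).trans
    (QuotientAddGroup.quotientKerEquivOfSurjective _ PBarOneAux.Phi_surjective)⟩
end

section
/- Let V be a finite-dimensional complex inner product space, let H₀ and H₁ be self-adjoint operators on V, and suppose ψ ∈ V is a unit vector that is an eigenvector of both H₀ and H₁ with eigenvalues E₀ and E₁ respectively, such that for i = 0, 1 every other eigenvalue of H_i is at least E_i + Δ_i with Δ_i > 0 (i.e., ψ spans the ground-state eigenspace with spectral gap Δ_i). Then for every t ∈ [0,1], ψ is an eigenvector of H_t := (1−t)H₀ + tH₁ with eigenvalue (1−t)E₀ + tE₁, this is the smallest eigenvalue of H_t, and every other eigenvalue of H_t is at least (1−t)E₀ + tE₁ + (1−t)Δ₀ + tΔ₁. -/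
open Module LinearMap

local notation "⟪" x ", " y "⟫" => @inner ℂ _ _ x y

lemma quad_lower_bound
    {V : Type*} [NormedAddCommGroup V] [InnerProductSpace ℂ V]
    [FiniteDimensional ℂ V]
    (T : Module.End ℂ V) (hT : T.IsSymmetric)
    (ψ : V) (E Δ : ℝ)
    (hspan : T.eigenspace (E : ℂ) = Submodule.span ℂ {ψ})
    (hgap : ∀ μ : ℝ, T.HasEigenvalue (μ : ℂ) → μ ≠ E → E + Δ ≤ μ)
    (v : V) (hv : ⟪ψ, v⟫ = 0) :
    (E + Δ) * ‖v‖ ^ 2 ≤ (⟪v, T v⟫).re := by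
  have hn : Module.finrank ℂ V = Module.finrank ℂ V := rfl
  set b := hT.eigenvectorBasis hn with hb
  set μ := hT.eigenvalues hn with hμ
  set c : Fin (Module.finrank ℂ V) → ℂ := fun i => ⟪b i, v⟫ with hc
  have hconj : ∀ i, ⟪v, b i⟫ = starRingEnd ℂ (c i) := by
    intro i; exact (inner_conj_symm v (b i)).symm
  have hcoef : ∀ i, ⟪b i, T v⟫ = (μ i : ℂ) * c i := by
    intro i
    have h1 : ⟪b i, T v⟫ = b.repr (T v) i := (b.repr_apply_apply (T v) i).symm
    have h2 : c i = b.repr v i := (b.repr_apply_apply v i).symm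
    rw [h1, hT.eigenvectorBasis_apply_self_apply hn v i, h2]; rfl
  have hre : (⟪v, T v⟫).re = ∑ i, μ i * ‖c i‖ ^ 2 := by
    rw [← b.sum_inner_mul_inner v (T v), Complex.re_sum]
    refine Finset.sum_congr rfl fun i _ => ?_
    rw [hcoef i, hconj i]
    have he : (starRingEnd ℂ) (c i) * ((μ i : ℂ) * c i)
        = (μ i : ℂ) * (c i * (starRingEnd ℂ) (c i)) := by ring
    rw [he, Complex.mul_conj]
    simp [← Complex.ofReal_mul, ← Complex.ofReal_pow, Complex.normSq_eq_norm_sq]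
  have hnorm : ‖v‖ ^ 2 = ∑ i, ‖c i‖ ^ 2 := by
    have h := b.sum_inner_mul_inner v v
    have : (⟪v, v⟫).re = ∑ i, ‖c i‖ ^ 2 := by
      rw [← h, Complex.re_sum]
      refine Finset.sum_congr rfl fun i _ => ?_
      rw [hconj i, mul_comm, Complex.mul_conj]
      simp [Complex.normSq_eq_norm_sq, ← Complex.ofReal_pow]; rfl
    rw [← this, inner_self_eq_norm_sq_to_K (𝕜 := ℂ) v]
    simp [← Complex.ofReal_pow]
  have hterm : ∀ i, (E + Δ) * ‖c i‖ ^ 2 ≤ μ i * ‖c i‖ ^ 2 := by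
    intro i
    by_cases hiE : μ i = E
    · have hmem : b i ∈ Submodule.span ℂ {ψ} := by
        rw [← hspan, Module.End.mem_eigenspace_iff]
        have h4 := hT.apply_eigenvectorBasis hn i
        have hiE' : hT.eigenvalues hn i = E := hiE
        rw [hiE'] at h4
        exact h4
      obtain ⟨a, ha⟩ := Submodule.mem_span_singleton.mp hmem
      have : c i = 0 := by
        rw [hc]; simp only [← ha, inner_smul_left, hv, mul_zero]
      rw [this]; simp
    · have := hgap (μ i) (hT.hasEigenvalue_eigenvalues hn i) hiE
      exact mul_le_mul_of_nonneg_right this (by positivity)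
  calc (E + Δ) * ‖v‖ ^ 2 = ∑ i, (E + Δ) * ‖c i‖ ^ 2 := by
        rw [hnorm, Finset.mul_sum]
    _ ≤ ∑ i, μ i * ‖c i‖ ^ 2 := Finset.sum_le_sum fun i _ => hterm i
    _ = (⟪v, T v⟫).re := hre.symm


/-- Let `H₀`, `H₁` be self-adjoint operators on a finite-dimensional complex
inner product space `V` and `ψ` a unit vector that is a common eigenvector
with eigenvalues `E₀`, `E₁`, spanning the corresponding eigenspaces, such
that every other eigenvalue of `Hᵢ` is at least `Eᵢ + Δᵢ` with `Δᵢ > 0`.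
Then for every `t ∈ [0,1]`, `ψ` is an eigenvector of
`H_t = (1-t)H₀ + tH₁` with eigenvalue `E_t = (1-t)E₀ + tE₁`, this is the
smallest eigenvalue of `H_t`, and every other eigenvalue of `H_t` is at
least `E_t + (1-t)Δ₀ + tΔ₁`. -/
theorem linear_interpolation_gapped
    {V : Type*} [NormedAddCommGroup V] [InnerProductSpace ℂ V]
    [FiniteDimensional ℂ V]
    (H₀ H₁ : Module.End ℂ V)
    (hH₀ : H₀.IsSymmetric) (hH₁ : H₁.IsSymmetric)
    (ψ : V) (hψ : ‖ψ‖ = 1)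
    (E₀ E₁ Δ₀ Δ₁ : ℝ) (hΔ₀ : 0 < Δ₀) (hΔ₁ : 0 < Δ₁)
    (heig₀ : H₀ ψ = (E₀ : ℂ) • ψ) (heig₁ : H₁ ψ = (E₁ : ℂ) • ψ)
    (hspan₀ : H₀.eigenspace (E₀ : ℂ) = Submodule.span ℂ {ψ})
    (hspan₁ : H₁.eigenspace (E₁ : ℂ) = Submodule.span ℂ {ψ})
    (hgap₀ : ∀ μ : ℝ, H₀.HasEigenvalue (μ : ℂ) → μ ≠ E₀ → E₀ + Δ₀ ≤ μ)
    (hgap₁ : ∀ μ : ℝ, H₁.HasEigenvalue (μ : ℂ) → μ ≠ E₁ → E₁ + Δ₁ ≤ μ) :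
    ∀ t : ℝ, t ∈ Set.Icc (0 : ℝ) 1 →
      (((1 - t : ℝ) : ℂ) • H₀ + ((t : ℝ) : ℂ) • H₁) ψ
          = (((1 - t) * E₀ + t * E₁ : ℝ) : ℂ) • ψ ∧
      (((1 - t : ℝ) : ℂ) • H₀ + ((t : ℝ) : ℂ) • H₁).HasEigenvalue
          (((1 - t) * E₀ + t * E₁ : ℝ) : ℂ) ∧
      (∀ μ : ℝ,
        (((1 - t : ℝ) : ℂ) • H₀ + ((t : ℝ) : ℂ) • H₁).HasEigenvalue (μ : ℂ) →
        (1 - t) * E₀ + t * E₁ ≤ μ) ∧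
      (∀ μ : ℝ,
        (((1 - t : ℝ) : ℂ) • H₀ + ((t : ℝ) : ℂ) • H₁).HasEigenvalue (μ : ℂ) →
        μ ≠ (1 - t) * E₀ + t * E₁ →
        (1 - t) * E₀ + t * E₁ + ((1 - t) * Δ₀ + t * Δ₁) ≤ μ) := by
  intro t ht
  obtain ⟨ht0, ht1⟩ := ht
  set T : Module.End ℂ V := ((1 - t : ℝ) : ℂ) • H₀ + ((t : ℝ) : ℂ) • H₁ with hT
  set Et : ℝ := (1 - t) * E₀ + t * E₁ with hEt
  have hψ0 : ψ ≠ 0 := by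
    intro h; rw [h, norm_zero] at hψ; norm_num at hψ
  -- ψ is an eigenvector of T
  have heig : T ψ = ((Et : ℝ) : ℂ) • ψ := by
    rw [hT]
    simp only [LinearMap.add_apply, LinearMap.smul_apply, heig₀, heig₁,
      smul_smul, ← add_smul]
    congr 1
    rw [hEt]
    push_cast
    ring
  -- T is symmetric
  have hTsymm : T.IsSymmetric := by
    intro x y
    simp only [hT, LinearMap.add_apply, LinearMap.smul_apply,
      inner_add_left, inner_add_right, inner_smul_left, inner_smul_right,
      hH₀ x y, hH₁ x y, Complex.conj_ofReal]
  have hhe : T.HasEigenvalue ((Et : ℝ) : ℂ) :=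
    Module.End.hasEigenvalue_of_hasEigenvector
      ⟨Module.End.mem_eigenspace_iff.mpr heig, hψ0⟩
  -- the gap statement
  have hgap : ∀ μ : ℝ, T.HasEigenvalue (μ : ℂ) → μ ≠ Et →
      Et + ((1 - t) * Δ₀ + t * Δ₁) ≤ μ := by
    intro μ hμ hne
    obtain ⟨v, hv⟩ := hμ.exists_hasEigenvector
    have hvne : v ≠ 0 := hv.2
    have hne' : ((Et : ℝ) : ℂ) ≠ (μ : ℂ) := by
      intro h
      exact hne (Complex.ofReal_injective h.symm)
    -- v is orthogonal to ψ
    have hperp : (inner ℂ ψ v : ℂ) = 0 :=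
      hTsymm.orthogonalFamily_eigenspaces hne'
        ⟨ψ, Module.End.mem_eigenspace_iff.mpr heig⟩ ⟨v, hv.1⟩
    have h0 := quad_lower_bound H₀ hH₀ ψ E₀ Δ₀ hspan₀ hgap₀ v hperp
    have h1 := quad_lower_bound H₁ hH₁ ψ E₁ Δ₁ hspan₁ hgap₁ v hperp
    have hvsq : (0 : ℝ) < ‖v‖ ^ 2 := pow_pos (norm_pos_iff.mpr hvne) 2
    -- compute re ⟪v, T v⟫ two ways
    have hTv : T v = (μ : ℂ) • v := Module.End.mem_eigenspace_iff.mp hv.1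
    have hre1 : (inner ℂ v (T v) : ℂ).re = μ * ‖v‖ ^ 2 := by
      rw [hTv, inner_smul_right, Complex.re_ofReal_mul]
      congr 1
      rw [inner_self_eq_norm_sq_to_K (𝕜 := ℂ) v]
      simp [← Complex.ofReal_pow]
    have hre2 : (inner ℂ v (T v) : ℂ).re
        = (1 - t) * (inner ℂ v (H₀ v) : ℂ).re + t * (inner ℂ v (H₁ v) : ℂ).re := by
      rw [hT]
      simp only [LinearMap.add_apply, LinearMap.smul_apply, inner_add_right,
        inner_smul_right, Complex.add_re, Complex.re_ofReal_mul]
    have key : μ * ‖v‖ ^ 2 ≥ ((1 - t) * (E₀ + Δ₀) + t * (E₁ + Δ₁)) * ‖v‖ ^ 2 := by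
      rw [← hre1, hre2]
      have b0 : (1 - t) * ((E₀ + Δ₀) * ‖v‖ ^ 2) ≤ (1 - t) * (inner ℂ v (H₀ v) : ℂ).re :=
        mul_le_mul_of_nonneg_left h0 (by linarith)
      have b1 : t * ((E₁ + Δ₁) * ‖v‖ ^ 2) ≤ t * (inner ℂ v (H₁ v) : ℂ).re :=
        mul_le_mul_of_nonneg_left h1 ht0
      nlinarith
    have := le_of_mul_le_mul_right (by nlinarith) hvsq
    rw [hEt]; nlinarith
  refine ⟨heig, hhe, ?_, hgap⟩
  -- minimality
  intro μ hμ
  by_cases h : μ = Et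
  · rw [h]
  · have := hgap μ hμ h
    have hpos : 0 < (1 - t) * Δ₀ + t * Δ₁ := by
      rcases lt_or_eq_of_le ht1 with h1 | h1
      · have : 0 < (1 - t) * Δ₀ := by nlinarith
        nlinarith
      · rw [h1]; nlinarith
    linarith
end
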